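/- Let p > 2 be a prime and let b₁, b̄₁, b₂, b̄₂ be non-negative integers such that d₁ = b₁ + b̄₁ > 0 and d₂ = b₂ + b̄₂ > 0. Then ∑_{1 ≤ j < k ≤ p-1} ( q^{b₁ j + b₂ k} + (-1)^{d₁ + d₂} q^{b̄₁ j + b̄₂ k} ) / ([j]_q^{d₁} [k]_q^{d₂}) ≡ (∑_{j=1}^{p-1} q^{b₁ j}/[j]_q^{d₁}) · (∑_{k=1}^{p-1} q^{b₂ k}/[k]_q^{d₂}) − ∑_{k=1}^{p-1} q^{(b₁+b₂)k}/[k]_q^{d₁+d₂} (mod [p]_q). -/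

import Mathlib

open Polynomial Finset

noncomputable section

/-- The `q`-integer `[n]_q = 1 + q + ⋯ + q^(n-1)`, as a polynomial in `ℚ[q]`. -/
def qIntP (n : ℕ) : Polynomial ℚ := ∑ i ∈ Finset.range n, X ^ i

/-- The `q`-integer `[n]_q` viewed in the field of rational functions `ℚ(q)`. -/
def qN (n : ℕ) : RatFunc ℚ := algebraMap (Polynomial ℚ) (RatFunc ℚ) (qIntP n)

/-- The `q`-Pochhammer symbol `(q; q)_n = ∏_{j=1}^{n} (1 - q^j)` in `ℚ(q)`. -/
def qqPoch (n : ℕ) : RatFunc ℚ :=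
  algebraMap (Polynomial ℚ) (RatFunc ℚ) (∏ j ∈ Finset.range n, (1 - X ^ (j + 1)))

/-- The `q`-Pochhammer symbol `(-q; q)_n = ∏_{j=1}^{n} (1 + q^j)` in `ℚ(q)`. -/
def nqPoch (n : ℕ) : RatFunc ℚ :=
  algebraMap (Polynomial ℚ) (RatFunc ℚ) (∏ j ∈ Finset.range n, (1 + X ^ (j + 1)))

/-- The Gaussian `q`-binomial coefficient, as a rational function. -/
def qbin (n k : ℕ) : RatFunc ℚ :=
  if k ≤ n then qqPoch n / (qqPoch k * qqPoch (n - k)) else 0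

/-- `qCong p r x y` means `x ≡ y (mod [p]_q^r)`: the difference `x - y` can be
written as a fraction whose numerator (a polynomial) is divisible by `[p]_q^r`
and whose denominator is relatively prime to `[p]_q`. -/
def qCong (p r : ℕ) (x y : RatFunc ℚ) : Prop :=
  ∃ a b : Polynomial ℚ, IsCoprime b (qIntP p) ∧
    (x - y) * algebraMap (Polynomial ℚ) (RatFunc ℚ) b =
      algebraMap (Polynomial ℚ) (RatFunc ℚ) (qIntP p ^ r * a)

local notation "φ" => algebraMap (Polynomial ℚ) (RatFunc ℚ)

lemma qIntP_ne_zero {n : ℕ} (hn : 0 < n) : qIntP n ≠ 0 := by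
  intro h
  have h1 : (qIntP n).eval 1 = (n : ℚ) := by simp [qIntP, eval_finset_sum]
  rw [h, eval_zero] at h1
  have h2 : (n : ℚ) ≠ 0 := by exact_mod_cast hn.ne'
  exact h2 h1.symm

lemma qN_ne_zero {n : ℕ} (hn : 0 < n) : qN n ≠ 0 :=
  RatFunc.algebraMap_ne_zero (qIntP_ne_zero hn)

lemma qIntP_natDegree {n : ℕ} (hn : 0 < n) : (qIntP n).natDegree = n - 1 := by
  have h : qIntP n * (X - 1) = X ^ n - 1 := geom_sum_mul X n
  have h2 : (qIntP n * (X - 1)).natDegree = n := by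
    rw [h, show ((X : Polynomial ℚ) ^ n - 1) = X ^ n - C 1 by simp,
      natDegree_X_pow_sub_C]
  have hx : ((X : Polynomial ℚ) - 1) ≠ 0 := by
    intro hc
    have := congrArg natDegree hc
    simp [show ((X : Polynomial ℚ) - 1) = X - C 1 by simp, natDegree_X_sub_C] at this
  rw [natDegree_mul (qIntP_ne_zero hn) hx,
    show ((X : Polynomial ℚ) - 1) = X - C 1 by simp, natDegree_X_sub_C] at h2
  omega

lemma qIntP_irr {p : ℕ} (hp : p.Prime) : Irreducible (qIntP p) := by
  have : Fact p.Prime := ⟨hp⟩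
  have h : qIntP p = cyclotomic p ℚ := by rw [cyclotomic_prime]; rfl
  rw [h]
  exact cyclotomic.irreducible_rat hp.pos

lemma coprime_qIntP {p : ℕ} (hp : p.Prime) {j : ℕ} (hj : 0 < j) (hjp : j < p) :
    IsCoprime (qIntP j) (qIntP p) := by
  refine (((qIntP_irr hp).coprime_iff_not_dvd).mpr ?_).symm
  intro hdvd
  have := Polynomial.natDegree_le_of_dvd hdvd (qIntP_ne_zero hj)
  rw [qIntP_natDegree hp.pos, qIntP_natDegree hj] at this
  omega

lemma coprime_X_pow {p : ℕ} (hp : p.Prime) (hp2 : 2 < p) (m : ℕ) :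
    IsCoprime ((X : Polynomial ℚ) ^ m) (qIntP p) := by
  apply IsCoprime.pow_left
  refine (((qIntP_irr hp).coprime_iff_not_dvd).mpr ?_).symm
  intro hdvd
  have := Polynomial.natDegree_le_of_dvd hdvd Polynomial.X_ne_zero
  rw [qIntP_natDegree hp.pos, natDegree_X] at this
  omega

lemma qCong_refl (p : ℕ) (x : RatFunc ℚ) : qCong p 1 x x :=
  ⟨0, 1, isCoprime_one_left, by simp⟩

lemma qCong_symm {p : ℕ} {x y : RatFunc ℚ} (h : qCong p 1 x y) : qCong p 1 y x := by
  obtain ⟨a, b, hb, he⟩ := h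
  refine ⟨-a, b, hb, ?_⟩
  rw [← neg_sub x y, neg_mul, he, mul_neg, map_neg]

lemma qCong_add {p : ℕ} {x x' y y' : RatFunc ℚ} (h : qCong p 1 x y) (h' : qCong p 1 x' y') :
    qCong p 1 (x + x') (y + y') := by
  obtain ⟨a, b, hb, he⟩ := h
  obtain ⟨a', b', hb', he'⟩ := h'
  refine ⟨a * b' + a' * b, b * b', hb.mul_left hb', ?_⟩
  have key : (x + x' - (y + y')) * φ (b * b') =
      ((x - y) * φ b) * φ b' + ((x' - y') * φ b') * φ b := by
    simp only [map_mul]; ring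
  rw [key, he, he', ← map_mul, ← map_mul, ← map_add]
  congr 1
  ring

def Good (p : ℕ) (z : RatFunc ℚ) : Prop :=
  ∃ c d : Polynomial ℚ, IsCoprime d (qIntP p) ∧ z * φ d = φ c

lemma Good.mul {p : ℕ} {z w : RatFunc ℚ} (hz : Good p z) (hw : Good p w) : Good p (z * w) := by
  obtain ⟨c, d, hd, he⟩ := hz
  obtain ⟨c', d', hd', he'⟩ := hw
  refine ⟨c * c', d * d', hd.mul_left hd', ?_⟩
  rw [map_mul, map_mul, ← he, ← he']; ring

lemma good_div {p : ℕ} (c d : Polynomial ℚ) (hd0 : d ≠ 0) (hd : IsCoprime d (qIntP p)) :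
    Good p (φ c / φ d) :=
  ⟨c, d, hd, div_mul_cancel₀ _ (RatFunc.algebraMap_ne_zero hd0)⟩

lemma good_sign (p n : ℕ) : Good p ((-1 : RatFunc ℚ) ^ n) :=
  ⟨(-1) ^ n, 1, isCoprime_one_left, by simp⟩

lemma good_term {p : ℕ} (hp : p.Prime) (hp2 : 2 < p) (b d : ℕ) {j : ℕ}
    (hj1 : 1 ≤ j) (hjp : j ≤ p - 1) :
    Good p ((RatFunc.X : RatFunc ℚ) ^ (b * j) / qN j ^ d) := by
  have h : (RatFunc.X : RatFunc ℚ) ^ (b * j) / qN j ^ d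
      = φ (X ^ (b * j)) / φ (qIntP j ^ d) := by
    rw [map_pow, map_pow, RatFunc.algebraMap_X]; rfl
  rw [h]
  exact good_div _ _ (pow_ne_zero _ (qIntP_ne_zero (by omega)))
    ((coprime_qIntP hp (by omega) (by omega)).pow_left)

lemma qCong_mul {p : ℕ} {x₁ x₂ y₁ y₂ : RatFunc ℚ} (h₁ : qCong p 1 x₁ y₁) (h₂ : qCong p 1 x₂ y₂)
    (g₁ : Good p y₁) (g₂ : Good p x₂) : qCong p 1 (x₁ * x₂) (y₁ * y₂) := by
  obtain ⟨a₁, b₁, hb₁, he₁⟩ := h₁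
  obtain ⟨a₂, b₂, hb₂, he₂⟩ := h₂
  obtain ⟨c₁, d₁, hd₁, hg₁⟩ := g₁
  obtain ⟨c₂, d₂, hd₂, hg₂⟩ := g₂
  refine ⟨a₁ * c₂ * b₂ * d₁ + c₁ * a₂ * b₁ * d₂, b₁ * b₂ * d₁ * d₂,
    ((hb₁.mul_left hb₂).mul_left hd₁).mul_left hd₂, ?_⟩
  have key : (x₁ * x₂ - y₁ * y₂) * φ (b₁ * b₂ * d₁ * d₂) =
      (((x₁ - y₁) * φ b₁) * (x₂ * φ d₂)) * (φ b₂ * φ d₁) +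
      ((y₁ * φ d₁) * ((x₂ - y₂) * φ b₂)) * (φ b₁ * φ d₂) := by
    simp only [map_mul]; ring
  rw [key, he₁, hg₂, hg₁, he₂, ← map_mul, ← map_mul, ← map_mul, ← map_mul, ← map_mul,
    ← map_mul, ← map_add]
  congr 1
  ring

lemma qCong_sum {p : ℕ} {ι : Type*} (s : Finset ι) (f g : ι → RatFunc ℚ)
    (h : ∀ i ∈ s, qCong p 1 (f i) (g i)) :
    qCong p 1 (∑ i ∈ s, f i) (∑ i ∈ s, g i) := by
  classical
  induction s using Finset.induction with
  | empty => simpa using qCong_refl p 0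
  | insert _ _ hx ih =>
      rw [Finset.sum_insert hx, Finset.sum_insert hx]
      exact qCong_add (h _ (mem_insert_self _ _)) (ih fun i hi => h _ (mem_insert_of_mem hi))

lemma qIntP_split {j n : ℕ} (h : j ≤ n) :
    qIntP n = qIntP j + X ^ j * qIntP (n - j) := by
  unfold qIntP
  conv_lhs => rw [show n = j + (n - j) by omega]
  rw [Finset.sum_range_add]
  congr 1
  rw [Finset.mul_sum]
  exact Finset.sum_congr rfl fun i _ => (pow_add X j i)

lemma qIntP_dvd_key {p : ℕ} (b bb d : ℕ) (hd : d = b + bb) (j : ℕ) :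
    qIntP p ∣ (X ^ (b * p + bb * j) * qIntP j ^ d
      - X ^ (bb * j) * (qIntP j - qIntP p) ^ d) := by
  have h0 : qIntP p ∣ (X : Polynomial ℚ) ^ p - 1 := ⟨X - 1, (geom_sum_mul X p).symm⟩
  have h1 : qIntP p ∣ (X : Polynomial ℚ) ^ (b * p) - 1 := by
    have := sub_dvd_pow_sub_pow ((X : Polynomial ℚ) ^ p) 1 b
    rw [← pow_mul, one_pow, mul_comm p b] at this
    exact h0.trans this
  have h2 : qIntP p ∣ qIntP j ^ d - (qIntP j - qIntP p) ^ d := by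
    have := sub_dvd_pow_sub_pow (qIntP j) (qIntP j - qIntP p) d
    rwa [sub_sub_cancel] at this
  have key : X ^ (b * p + bb * j) * qIntP j ^ d - X ^ (bb * j) * (qIntP j - qIntP p) ^ d
      = X ^ (bb * j) * (((X ^ (b * p) - 1) * qIntP j ^ d)
        + (qIntP j ^ d - (qIntP j - qIntP p) ^ d)) := by
    ring
  rw [key]
  exact (dvd_add (h1.mul_right _) h2).mul_left _

lemma key_cong {p : ℕ} (hp : p.Prime) (hp2 : 2 < p) (b bb d : ℕ) (hd : d = b + bb)
    {j : ℕ} (hj1 : 1 ≤ j) (hjp : j ≤ p - 1) :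
    qCong p 1 ((RatFunc.X : RatFunc ℚ) ^ (b * (p - j)) / qN (p - j) ^ d)
      ((-1 : RatFunc ℚ) ^ d * (RatFunc.X ^ (bb * j) / qN j ^ d)) := by
  obtain ⟨a, ha⟩ := qIntP_dvd_key (p := p) b bb d hd j
  refine ⟨a, qIntP j ^ d * qIntP (p - j) ^ d * X ^ (d * j),
    (((coprime_qIntP hp (by omega) (by omega)).pow_left).mul_left
      ((coprime_qIntP hp (p := p) (j := p - j) (by omega) (by omega)).pow_left)).mul_left
      (coprime_X_pow hp hp2 _), ?_⟩
  have hA : φ (qIntP j) ≠ 0 := RatFunc.algebraMap_ne_zero (qIntP_ne_zero (by omega))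
  have hB : φ (qIntP (p - j)) ≠ 0 := RatFunc.algebraMap_ne_zero (qIntP_ne_zero (by omega))
  have hPk : φ (qIntP p) = φ (qIntP j) + (RatFunc.X : RatFunc ℚ) ^ j * φ (qIntP (p - j)) := by
    rw [qIntP_split (show j ≤ p by omega), map_add, map_mul, map_pow, RatFunc.algebraMap_X]
  have hexp : b * p + bb * j = b * (p - j) + d * j := by
    have : b * p = b * (p - j) + b * j := by
      rw [← Nat.mul_add, Nat.sub_add_cancel (by omega : j ≤ p)]
    rw [this, hd]; ring
  rw [pow_one, ← ha, hexp]
  have hXX : (RatFunc.X : RatFunc ℚ) = φ X := (RatFunc.algebraMap_X).symm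
  simp only [map_sub, map_mul, map_pow, map_add, ← hXX]
  show ((RatFunc.X : RatFunc ℚ) ^ (b * (p - j)) / φ (qIntP (p - j)) ^ d
      - (-1 : RatFunc ℚ) ^ d * (RatFunc.X ^ (bb * j) / φ (qIntP j) ^ d))
      * (φ (qIntP j) ^ d * φ (qIntP (p - j)) ^ d * RatFunc.X ^ (d * j)) = _
  have hsub : φ (qIntP j) - φ (qIntP p) = -(RatFunc.X ^ j * φ (qIntP (p - j))) := by
    rw [hPk]; ring
  have hneg : (-(RatFunc.X ^ j * φ (qIntP (p - j)))) ^ d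
      = (-1 : RatFunc ℚ) ^ d * (RatFunc.X ^ (j * d) * φ (qIntP (p - j)) ^ d) := by
    rw [neg_pow, mul_pow, ← pow_mul]
  rw [hsub, hneg]
  field_simp
  ring

lemma square_split {M : Type*} [AddCommMonoid M] (n : ℕ) (F : ℕ → ℕ → M) :
    ∑ j ∈ Icc 1 n, ∑ k ∈ Icc 1 n, F j k
      = (∑ k ∈ Icc 1 n, ∑ j ∈ Icc 1 (k - 1), (F j k + F k j)) + ∑ k ∈ Icc 1 n, F k k := by
  induction n with
  | zero => simp
  | succ n ih =>
    have hIns : Icc 1 (n + 1) = insert (n + 1) (Icc 1 n) :=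
      (Finset.insert_Icc_right_eq_Icc_add_one (by omega)).symm
    have hni : (n + 1) ∉ Icc 1 n := by simp
    rw [hIns]
    simp only [Finset.sum_insert hni]
    rw [Finset.sum_add_distrib, ih, Nat.add_sub_cancel]
    simp only [Finset.sum_add_distrib]
    abel

lemma reindex_tri (p : ℕ) (F G : ℕ → RatFunc ℚ) :
    ∑ k ∈ Icc 1 (p - 1), ∑ j ∈ Icc 1 (k - 1), F k * G j
      = ∑ k ∈ Icc 1 (p - 1), ∑ j ∈ Icc 1 (k - 1), F (p - j) * G (p - k) := by
  have L : ∑ k ∈ Icc 1 (p - 1), ∑ j ∈ Icc 1 (k - 1), F k * G j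
      = ∑ x ∈ (Icc 1 (p - 1)).sigma (fun k => Icc 1 (k - 1)), F x.1 * G x.2 :=
    Finset.sum_sigma' _ _ _
  have R : ∑ k ∈ Icc 1 (p - 1), ∑ j ∈ Icc 1 (k - 1), F (p - j) * G (p - k)
      = ∑ x ∈ (Icc 1 (p - 1)).sigma (fun k => Icc 1 (k - 1)), F (p - x.2) * G (p - x.1) :=
    Finset.sum_sigma' _ _ _
  rw [L, R]
  refine Finset.sum_nbij' (fun x => ⟨p - x.2, p - x.1⟩) (fun x => ⟨p - x.2, p - x.1⟩)
    ?_ ?_ ?_ ?_ ?_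
  · rintro ⟨k, j⟩ hm
    simp only [Finset.mem_sigma, Finset.mem_Icc] at hm ⊢
    omega
  · rintro ⟨k, j⟩ hm
    simp only [Finset.mem_sigma, Finset.mem_Icc] at hm ⊢
    omega
  · rintro ⟨k, j⟩ hm
    simp only [Finset.mem_sigma, Finset.mem_Icc] at hm
    simp only [Sigma.mk.inj_iff, heq_eq_eq]
    constructor <;> omega
  · rintro ⟨k, j⟩ hm
    simp only [Finset.mem_sigma, Finset.mem_Icc] at hm
    simp only [Sigma.mk.inj_iff, heq_eq_eq]
    constructor <;> omega
  · rintro ⟨k, j⟩ hm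
    simp only [Finset.mem_sigma, Finset.mem_Icc] at hm
    have e1 : p - (p - k) = k := by omega
    have e2 : p - (p - j) = j := by omega
    simp only [e1, e2]

theorem qHH' (p : ℕ) (hp : p.Prime) (hp2 : 2 < p)
    (b₁ bb₁ b₂ bb₂ : ℕ) (d₁ d₂ : ℕ) (hd₁ : d₁ = b₁ + bb₁) (hd₂ : d₂ = b₂ + bb₂)
    (h₁ : 0 < d₁) (h₂ : 0 < d₂) :
    qCong p 1
      (∑ k ∈ Finset.Icc 1 (p - 1), ∑ j ∈ Finset.Icc 1 (k - 1),
        ((RatFunc.X : RatFunc ℚ) ^ (b₁ * j + b₂ * k) +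
            (-1 : RatFunc ℚ) ^ (d₁ + d₂) * RatFunc.X ^ (bb₁ * j + bb₂ * k)) /
          (qN j ^ d₁ * qN k ^ d₂))
      ((∑ j ∈ Finset.Icc 1 (p - 1), (RatFunc.X : RatFunc ℚ) ^ (b₁ * j) / qN j ^ d₁) *
          (∑ k ∈ Finset.Icc 1 (p - 1), (RatFunc.X : RatFunc ℚ) ^ (b₂ * k) / qN k ^ d₂)
        - ∑ k ∈ Finset.Icc 1 (p - 1),
            (RatFunc.X : RatFunc ℚ) ^ ((b₁ + b₂) * k) / qN k ^ (d₁ + d₂)) := by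
  set f : ℕ → RatFunc ℚ := fun j => (RatFunc.X : RatFunc ℚ) ^ (b₁ * j) / qN j ^ d₁ with hf
  set g : ℕ → RatFunc ℚ := fun k => (RatFunc.X : RatFunc ℚ) ^ (b₂ * k) / qN k ^ d₂ with hg
  set fb : ℕ → RatFunc ℚ := fun j => (RatFunc.X : RatFunc ℚ) ^ (bb₁ * j) / qN j ^ d₁ with hfb
  set gb : ℕ → RatFunc ℚ := fun k => (RatFunc.X : RatFunc ℚ) ^ (bb₂ * k) / qN k ^ d₂ with hgb
  -- Step 1: rewrite the RHS as a triangle sum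
  have hdiag : ∀ k, f k * g k
      = (RatFunc.X : RatFunc ℚ) ^ ((b₁ + b₂) * k) / qN k ^ (d₁ + d₂) := by
    intro k
    rw [hf, hg]
    simp only
    rw [div_mul_div_comm, ← pow_add, ← pow_add, ← Nat.add_mul]
  have hsq : (∑ j ∈ Finset.Icc 1 (p - 1), f j) * (∑ k ∈ Finset.Icc 1 (p - 1), g k)
      = (∑ k ∈ Icc 1 (p - 1), ∑ j ∈ Icc 1 (k - 1), (f j * g k + f k * g j))
        + ∑ k ∈ Icc 1 (p - 1), f k * g k := by
    rw [Finset.sum_mul_sum, square_split]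
  have hRHS : (∑ j ∈ Finset.Icc 1 (p - 1), f j) * (∑ k ∈ Finset.Icc 1 (p - 1), g k)
        - ∑ k ∈ Finset.Icc 1 (p - 1),
            (RatFunc.X : RatFunc ℚ) ^ ((b₁ + b₂) * k) / qN k ^ (d₁ + d₂)
      = ∑ k ∈ Icc 1 (p - 1), ∑ j ∈ Icc 1 (k - 1), (f j * g k + f k * g j) := by
    rw [hsq]
    have : ∑ k ∈ Finset.Icc 1 (p - 1),
        (RatFunc.X : RatFunc ℚ) ^ ((b₁ + b₂) * k) / qN k ^ (d₁ + d₂)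
        = ∑ k ∈ Icc 1 (p - 1), f k * g k :=
      Finset.sum_congr rfl fun k _ => (hdiag k).symm
    rw [this]
    ring
  rw [hRHS]
  -- Step 2: rewrite the LHS termwise
  have hLHS : ∀ k, ∀ j,
      ((RatFunc.X : RatFunc ℚ) ^ (b₁ * j + b₂ * k) +
            (-1 : RatFunc ℚ) ^ (d₁ + d₂) * RatFunc.X ^ (bb₁ * j + bb₂ * k)) /
          (qN j ^ d₁ * qN k ^ d₂)
      = f j * g k + (-1 : RatFunc ℚ) ^ (d₁ + d₂) * (fb j * gb k) := by
    intro k j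
    rw [hf, hg, hfb, hgb]
    simp only
    rw [div_mul_div_comm, div_mul_div_comm, ← pow_add, ← pow_add, add_div, mul_div_assoc]
  simp only [hLHS]
  simp only [Finset.sum_add_distrib]
  -- Step 3: congruence on the second part
  refine qCong_add (qCong_refl p _) ?_
  have hre := reindex_tri p f g
  rw [hre]
  refine qCong_symm (qCong_sum _ _ _ ?_)
  intro k hk
  refine qCong_sum _ _ _ ?_
  intro j hj
  simp only [Finset.mem_Icc] at hk hj
  have hkey₁ := key_cong hp hp2 b₁ bb₁ d₁ hd₁ (j := j) (by omega) (by omega)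
  have hkey₂ := key_cong hp hp2 b₂ bb₂ d₂ hd₂ (j := k) (by omega) (by omega)
  have hmul := qCong_mul hkey₁ hkey₂
    ((good_sign p d₁).mul (good_term hp hp2 bb₁ d₁ (j := j) (by omega) (by omega)))
    (by
      have : (RatFunc.X : RatFunc ℚ) ^ (b₂ * (p - k)) / qN (p - k) ^ d₂ =
          (RatFunc.X : RatFunc ℚ) ^ (b₂ * (p - k)) / qN (p - k) ^ d₂ := rfl
      exact good_term hp hp2 b₂ d₂ (j := p - k) (by omega) (by omega))
  have heq : ((-1 : RatFunc ℚ) ^ d₁ * (RatFunc.X ^ (bb₁ * j) / qN j ^ d₁)) *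
      ((-1 : RatFunc ℚ) ^ d₂ * (RatFunc.X ^ (bb₂ * k) / qN k ^ d₂))
      = (-1 : RatFunc ℚ) ^ (d₁ + d₂) * (fb j * gb k) := by
    rw [hfb, hgb]
    simp only
    rw [pow_add]
    ring
  rw [heq] at hmul
  exact hmul


/-- For a prime `p > 2` and non-negative integers `b₁, b̄₁, b₂, b̄₂` with
`d₁ = b₁ + b̄₁ > 0` and `d₂ = b₂ + b̄₂ > 0`:
`∑_{1≤j<k≤p-1} (q^{b₁j+b₂k} + (-1)^{d₁+d₂} q^{b̄₁j+b̄₂k})/([j]_q^{d₁}[k]_q^{d₂}) ≡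
  (∑_{j=1}^{p-1} q^{b₁j}/[j]_q^{d₁})(∑_{k=1}^{p-1} q^{b₂k}/[k]_q^{d₂})
    − ∑_{k=1}^{p-1} q^{(b₁+b₂)k}/[k]_q^{d₁+d₂} (mod [p]_q)`. -/
theorem qHH (p : ℕ) (hp : p.Prime) (hp2 : 2 < p)
    (b₁ bb₁ b₂ bb₂ : ℕ) (d₁ d₂ : ℕ) (hd₁ : d₁ = b₁ + bb₁) (hd₂ : d₂ = b₂ + bb₂)
    (h₁ : 0 < d₁) (h₂ : 0 < d₂) :
    qCong p 1
      (∑ k ∈ Finset.Icc 1 (p - 1), ∑ j ∈ Finset.Icc 1 (k - 1),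
        ((RatFunc.X : RatFunc ℚ) ^ (b₁ * j + b₂ * k) +
            (-1 : RatFunc ℚ) ^ (d₁ + d₂) * RatFunc.X ^ (bb₁ * j + bb₂ * k)) /
          (qN j ^ d₁ * qN k ^ d₂))
      ((∑ j ∈ Finset.Icc 1 (p - 1), (RatFunc.X : RatFunc ℚ) ^ (b₁ * j) / qN j ^ d₁) *
          (∑ k ∈ Finset.Icc 1 (p - 1), (RatFunc.X : RatFunc ℚ) ^ (b₂ * k) / qN k ^ d₂)
        - ∑ k ∈ Finset.Icc 1 (p - 1),
            (RatFunc.X : RatFunc ℚ) ^ ((b₁ + b₂) * k) / qN k ^ (d₁ + d₂)) :=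
  qHH' p hp hp2 b₁ bb₁ b₂ bb₂ d₁ d₂ hd₁ hd₂ h₁ h₂
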